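/- The function u(x,t) = (105/169) sech⁴((1/(2√13))(x − (205/169)t)) is a classical solution of the Kawahara-type equation u_t + u_x + u u_x + u_xxx − u_xxxxx = 0 on ℝ × ℝ. -/

import Mathlib

open Real

noncomputable def FF (y : ℝ) : ℝ := (105 / 169) * (1 / Real.cosh y) ^ 4
noncomputable def D1 (y : ℝ) : ℝ := (-(420 : ℝ)/169) * (Real.sinh y / Real.cosh y ^ 5)
noncomputable def D2 (y : ℝ) : ℝ :=
  (-(420 : ℝ)/169) * (1 / Real.cosh y ^ 4 - 5 * Real.sinh y ^ 2 / Real.cosh y ^ 6)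
noncomputable def D3 (y : ℝ) : ℝ :=
  (-(420 : ℝ)/169) * (-14 * Real.sinh y / Real.cosh y ^ 5 + 30 * Real.sinh y ^ 3 / Real.cosh y ^ 7)
noncomputable def D4 (y : ℝ) : ℝ :=
  (-(420 : ℝ)/169) * (-14 / Real.cosh y ^ 4 + 160 * Real.sinh y ^ 2 / Real.cosh y ^ 6
    - 210 * Real.sinh y ^ 4 / Real.cosh y ^ 8)
noncomputable def D5 (y : ℝ) : ℝ :=
  (-(420 : ℝ)/169) * (376 * Real.sinh y / Real.cosh y ^ 5 - 1800 * Real.sinh y ^ 3 / Real.cosh y ^ 7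
    + 1680 * Real.sinh y ^ 5 / Real.cosh y ^ 9)

lemma coshne (y : ℝ) : Real.cosh y ≠ 0 := (Real.cosh_pos y).ne'

lemma hFF (y : ℝ) : HasDerivAt FF (D1 y) y := by
  have h : HasDerivAt (fun y => (105 / 169 : ℝ) * (1 / Real.cosh y) ^ 4)
      ((105/169 : ℝ) * (4 * (1 / Real.cosh y) ^ 3 *
        ((0 * Real.cosh y - 1 * Real.sinh y) / Real.cosh y ^ 2))) y := by
    exact (((hasDerivAt_const y (1:ℝ)).div (Real.hasDerivAt_cosh y) (coshne y)).pow 4).const_mul _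
  convert h using 1
  · rfl
  unfold D1; field_simp; ring

lemma hD1 (y : ℝ) : HasDerivAt D1 (D2 y) y := by
  have h : HasDerivAt (fun y => (-(420 : ℝ)/169) * (Real.sinh y / Real.cosh y ^ 5))
      ((-(420 : ℝ)/169) * ((Real.cosh y * Real.cosh y ^ 5 -
        Real.sinh y * (5 * Real.cosh y ^ 4 * Real.sinh y)) / (Real.cosh y ^ 5) ^ 2)) y :=
    ((Real.hasDerivAt_sinh y).div ((Real.hasDerivAt_cosh y).pow 5)
      (pow_ne_zero _ (coshne y))).const_mul _
  convert h using 1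
  · rfl
  unfold D2; field_simp

lemma hD2 (y : ℝ) : HasDerivAt D2 (D3 y) y := by
  have h : HasDerivAt (fun y => (-(420 : ℝ)/169) *
      (1 / Real.cosh y ^ 4 - 5 * Real.sinh y ^ 2 / Real.cosh y ^ 6))
      ((-(420 : ℝ)/169) *
        ((0 * Real.cosh y ^ 4 - 1 * (4 * Real.cosh y ^ 3 * Real.sinh y)) / (Real.cosh y ^ 4) ^ 2
        - ((5 * (2 * Real.sinh y ^ 1 * Real.cosh y)) * Real.cosh y ^ 6 -
            5 * Real.sinh y ^ 2 * (6 * Real.cosh y ^ 5 * Real.sinh y)) / (Real.cosh y ^ 6) ^ 2)) y := by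
    have h1 := (hasDerivAt_const y (1:ℝ)).div ((Real.hasDerivAt_cosh y).pow 4)
      (pow_ne_zero _ (coshne y))
    have h2 := (((Real.hasDerivAt_sinh y).pow 2).const_mul (5:ℝ)).div
      ((Real.hasDerivAt_cosh y).pow 6) (pow_ne_zero _ (coshne y))
    exact (h1.sub h2).const_mul _
  convert h using 1
  · rfl
  unfold D3; field_simp; ring

lemma hD3 (y : ℝ) : HasDerivAt D3 (D4 y) y := by
  have h : HasDerivAt (fun y => (-(420 : ℝ)/169) *
      (-14 * Real.sinh y / Real.cosh y ^ 5 + 30 * Real.sinh y ^ 3 / Real.cosh y ^ 7))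
      ((-(420 : ℝ)/169) *
        (((-14 * Real.cosh y) * Real.cosh y ^ 5 -
            (-14 * Real.sinh y) * (5 * Real.cosh y ^ 4 * Real.sinh y)) / (Real.cosh y ^ 5) ^ 2
        + ((30 * (3 * Real.sinh y ^ 2 * Real.cosh y)) * Real.cosh y ^ 7 -
            30 * Real.sinh y ^ 3 * (7 * Real.cosh y ^ 6 * Real.sinh y)) / (Real.cosh y ^ 7) ^ 2)) y := by
    have h1 := (((Real.hasDerivAt_sinh y).const_mul (-14:ℝ)).div
      ((Real.hasDerivAt_cosh y).pow 5) (pow_ne_zero _ (coshne y)))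
    have h2 := ((((Real.hasDerivAt_sinh y).pow 3).const_mul (30:ℝ)).div
      ((Real.hasDerivAt_cosh y).pow 7) (pow_ne_zero _ (coshne y)))
    exact (h1.add h2).const_mul _
  convert h using 1
  · rfl
  unfold D4; field_simp; ring

lemma hD4 (y : ℝ) : HasDerivAt D4 (D5 y) y := by
  have h : HasDerivAt (fun y => (-(420 : ℝ)/169) *
      (-14 / Real.cosh y ^ 4 + 160 * Real.sinh y ^ 2 / Real.cosh y ^ 6
        - 210 * Real.sinh y ^ 4 / Real.cosh y ^ 8))
      ((-(420 : ℝ)/169) *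
        ((0 * Real.cosh y ^ 4 - (-14) * (4 * Real.cosh y ^ 3 * Real.sinh y)) / (Real.cosh y ^ 4) ^ 2
        + ((160 * (2 * Real.sinh y ^ 1 * Real.cosh y)) * Real.cosh y ^ 6 -
            160 * Real.sinh y ^ 2 * (6 * Real.cosh y ^ 5 * Real.sinh y)) / (Real.cosh y ^ 6) ^ 2
        - ((210 * (4 * Real.sinh y ^ 3 * Real.cosh y)) * Real.cosh y ^ 8 -
            210 * Real.sinh y ^ 4 * (8 * Real.cosh y ^ 7 * Real.sinh y)) / (Real.cosh y ^ 8) ^ 2)) y := by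
    have h1 := (hasDerivAt_const y (-14:ℝ)).div ((Real.hasDerivAt_cosh y).pow 4)
      (pow_ne_zero _ (coshne y))
    have h2 := (((Real.hasDerivAt_sinh y).pow 2).const_mul (160:ℝ)).div
      ((Real.hasDerivAt_cosh y).pow 6) (pow_ne_zero _ (coshne y))
    have h3 := (((Real.hasDerivAt_sinh y).pow 4).const_mul (210:ℝ)).div
      ((Real.hasDerivAt_cosh y).pow 8) (pow_ne_zero _ (coshne y))
    exact ((h1.add h2).sub h3).const_mul _
  convert h using 1
  · rfl
  unfold D5; field_simp; ring

lemma comp_deriv (G G' : ℝ → ℝ) (hG : ∀ y, HasDerivAt G (G' y) y) (m b : ℝ) :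
    deriv (fun ξ => G (m * ξ + b)) = fun x => m * G' (m * x + b) := by
  funext x
  have ha : HasDerivAt (fun ξ : ℝ => m * ξ + b) m x := by
    simpa using ((hasDerivAt_id x).const_mul m).add_const b
  have h := (hG (m * x + b)).comp x ha
  simpa [mul_comm, Function.comp_def] using h.deriv

theorem kawahara_single_soliton (u : ℝ → ℝ → ℝ)
    (hu : ∀ x t, u x t = (105 / 169) *
      (1 / Real.cosh ((1 / (2 * Real.sqrt 13)) * (x - (205 / 169) * t)))^4) :
    ∀ x t : ℝ,
      deriv (fun τ => u x τ) t + deriv (fun ξ => u ξ t) x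
        + u x t * deriv (fun ξ => u ξ t) x
        + iteratedDeriv 3 (fun ξ => u ξ t) x
        - iteratedDeriv 5 (fun ξ => u ξ t) x = 0 := by
  intro x t
  set k : ℝ := 1 / (2 * Real.sqrt 13) with hkdef
  have h13 : Real.sqrt 13 * Real.sqrt 13 = 13 := Real.mul_self_sqrt (by norm_num)
  have h13' : Real.sqrt 13 ≠ 0 := by positivity
  have hk2 : k ^ 2 = 1 / 52 := by
    rw [hkdef, div_pow, mul_pow, Real.sq_sqrt (by norm_num : (0:ℝ) ≤ 13)]; norm_num
  -- the two affine parametrizations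
  have hux : (fun ξ => u ξ t) = fun ξ => FF (k * ξ + -(k * (205 / 169) * t)) := by
    funext ξ
    rw [hu]
    unfold FF
    congr 2
    ring
  have hut : (fun τ => u x τ) = fun τ => FF (-(k * (205 / 169)) * τ + k * x) := by
    funext τ
    rw [hu]
    unfold FF
    congr 2
    ring
  have c1 := comp_deriv FF D1 hFF k (-(k * (205 / 169) * t))
  have c2 : deriv (fun x => k * D1 (k * x + -(k * (205 / 169) * t)))
      = fun x => k * (k * D2 (k * x + -(k * (205 / 169) * t))) :=
    comp_deriv (fun y => k * D1 y) (fun y => k * D2 y) (fun y => (hD1 y).const_mul k) _ _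
  have c3 : deriv (fun x => k * (k * D2 (k * x + -(k * (205 / 169) * t))))
      = fun x => k * (k * (k * D3 (k * x + -(k * (205 / 169) * t)))) :=
    comp_deriv (fun y => k * (k * D2 y)) (fun y => k * (k * D3 y))
      (fun y => ((hD2 y).const_mul k).const_mul k) _ _
  have c4 : deriv (fun x => k * (k * (k * D3 (k * x + -(k * (205 / 169) * t)))))
      = fun x => k * (k * (k * (k * D4 (k * x + -(k * (205 / 169) * t))))) :=
    comp_deriv (fun y => k * (k * (k * D3 y))) (fun y => k * (k * (k * D4 y)))
      (fun y => (((hD3 y).const_mul k).const_mul k).const_mul k) _ _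
  have c5 : deriv (fun x => k * (k * (k * (k * D4 (k * x + -(k * (205 / 169) * t))))))
      = fun x => k * (k * (k * (k * (k * D5 (k * x + -(k * (205 / 169) * t)))))) :=
    comp_deriv (fun y => k * (k * (k * (k * D4 y)))) (fun y => k * (k * (k * (k * D5 y))))
      (fun y => ((((hD4 y).const_mul k).const_mul k).const_mul k).const_mul k) _ _
  have ct := comp_deriv FF D1 hFF (-(k * (205 / 169))) (k * x)
  rw [hux, hut, hu x t, ct, c1,
    iteratedDeriv_succ, iteratedDeriv_succ, iteratedDeriv_one, c1, c2, c3,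
    iteratedDeriv_succ, iteratedDeriv_succ, iteratedDeriv_succ, iteratedDeriv_succ,
    iteratedDeriv_one, c1, c2, c3, c4, c5]
  simp only
  have harg : -(k * (205 / 169)) * t + k * x = k * x + -(k * (205 / 169) * t) := by ring
  rw [harg]
  set Y : ℝ := k * x + -(k * (205 / 169) * t) with hY
  have harg2 : 1 / (2 * Real.sqrt 13) * (x - 205 / 169 * t) = Y := by rw [hY, hkdef]; ring
  rw [harg2]
  have hA : ∀ X : ℝ, k * (k * (k * X)) = k / 52 * X := fun X => by
    linear_combination (k * X) * hk2
  have hB : ∀ X : ℝ, k * (k * (k * (k * (k * X)))) = k / 2704 * X := fun X => by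
    linear_combination (k ^ 3 * X + k * X / 52) * hk2
  rw [hB, hA]
  have h3 : Real.sinh Y ^ 3 = Real.sinh Y * (Real.cosh Y ^ 2 - 1) := by
    linear_combination Real.sinh Y * (Real.sinh_sq Y)
  have h5 : Real.sinh Y ^ 5 = Real.sinh Y * (Real.cosh Y ^ 2 - 1) ^ 2 := by
    linear_combination (Real.sinh Y ^ 3 + Real.sinh Y * (Real.cosh Y ^ 2 - 1)) * (Real.sinh_sq Y)
  simp only [D1, D3, D5]
  rw [h3, h5]
  have hc := coshne Y
  field_simp
  ring
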